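/- Let R be a term rewrite system such that |MSDC(r)| = 1 for every rule ℓ → r ∈ R. Then pirc_R(n) = irc_R(n) for all n ∈ ℕ. -/

import Mathlib

namespace ParallelComplexity

/-! ## First-order terms -/

inductive Term (σ : Type) (V : Type) : Type where
  | var : V → Term σ V
  | fn : σ → List (Term σ V) → Term σ V

variable {σ V : Type}

mutual
  /-- Application of a substitution to a term. -/
  def Term.subst (θ : V → Term σ V) : Term σ V → Term σ V
    | Term.var x => θ x
    | Term.fn f ts => Term.fn f (Term.substList θ ts)
  def Term.substList (θ : V → Term σ V) : List (Term σ V) → List (Term σ V)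
    | [] => []
    | t :: ts => Term.subst θ t :: Term.substList θ ts
end

mutual
  /-- The size |t| of a term. -/
  def Term.size : Term σ V → ℕ
    | Term.var _ => 1
    | Term.fn _ ts => 1 + Term.sizeList ts
  def Term.sizeList : List (Term σ V) → ℕ
    | [] => 0
    | t :: ts => Term.size t + Term.sizeList ts
end

/-- Subterm `t|π` at a position (positions are lists of argument indices);
`none` if the position is not a position of `t`. -/
def Term.subtermAt : Term σ V → List ℕ → Option (Term σ V)
  | t, [] => some t
  | Term.var _, _ :: _ => none
  | Term.fn _ ts, i :: π =>
    match ts[i]? with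
    | none => none
    | some u => Term.subtermAt u π

/-- `t[s]π`: replacement of the subterm at position `π` by `s`. -/
def Term.replaceAt : Term σ V → List ℕ → Term σ V → Option (Term σ V)
  | _, [], s => some s
  | Term.var _, _ :: _, _ => none
  | Term.fn f ts, i :: π, s =>
    match ts[i]? with
    | none => none
    | some u =>
      match Term.replaceAt u π s with
      | none => none
      | some u' => some (Term.fn f (ts.set i u'))

def Term.isVar (t : Term σ V) : Prop := ∃ x, t = Term.var x

/-- `x` occurs as a variable in the term. -/
inductive Term.VarIn (x : V) : Term σ V → Prop
  | var : Term.VarIn x (Term.var x)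
  | fn {f : σ} {ts : List (Term σ V)} {t : Term σ V} :
      t ∈ ts → Term.VarIn x t → Term.VarIn x (Term.fn f ts)

/-! ## Term rewrite systems -/

structure Rule (σ V : Type) where
  lhs : Term σ V
  rhs : Term σ V

/-- A well-formed TRS: a finite set of rules `ℓ → r` with `ℓ ∉ V` and
`Var(r) ⊆ Var(ℓ)`. -/
def IsWfTRS (R : Set (Rule σ V)) : Prop :=
  R.Finite ∧ (∀ r ∈ R, ¬ r.lhs.isVar) ∧
    ∀ r ∈ R, ∀ x : V, Term.VarIn x r.rhs → Term.VarIn x r.lhs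

def IsRedex (R : Set (Rule σ V)) (t : Term σ V) : Prop :=
  ∃ r ∈ R, ∃ θ : V → Term σ V, t = Term.subst θ r.lhs

/-- An innermost redex: a redex none of whose proper subterms is a redex. -/
def IsInnermostRedex (R : Set (Rule σ V)) (t : Term σ V) : Prop :=
  IsRedex R t ∧
    ∀ π : List ℕ, π ≠ [] → ∀ u, t.subtermAt π = some u → ¬ IsRedex R u

/-- One rewrite step at position `π`. -/
def RewriteAt (R : Set (Rule σ V)) (π : List ℕ) (s t : Term σ V) : Prop :=
  ∃ r ∈ R, ∃ θ : V → Term σ V,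
    s.subtermAt π = some (Term.subst θ r.lhs) ∧
    s.replaceAt π (Term.subst θ r.rhs) = some t

/-- The rewrite relation `s →_R t`. -/
def Rewrite (R : Set (Rule σ V)) (s t : Term σ V) : Prop := ∃ π, RewriteAt R π s t

/-- The innermost rewrite relation `s →i t`. -/
def InnermostRewrite (R : Set (Rule σ V)) (s t : Term σ V) : Prop :=
  ∃ π, ∃ r ∈ R, ∃ θ : V → Term σ V,
    s.subtermAt π = some (Term.subst θ r.lhs) ∧
    IsInnermostRedex R (Term.subst θ r.lhs) ∧
    s.replaceAt π (Term.subst θ r.rhs) = some t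

def NormalForm (R : Set (Rule σ V)) (t : Term σ V) : Prop := ¬ ∃ u, Rewrite R t u

/-- Parallel-innermost rewriting `s ⇉ t`: `s →i⁺ t` and either
(a) `s` is an innermost redex and `s →i t`, or (b) `s = f(s₁,…,sₙ)`,
`t = f(t₁,…,tₙ)` and each `sₖ ⇉ tₖ` or `sₖ = tₖ` is a normal form. -/
inductive ParInnermost (R : Set (Rule σ V)) : Term σ V → Term σ V → Prop
  | redex {s t : Term σ V} :
      Relation.TransGen (InnermostRewrite R) s t →
      IsInnermostRedex R s → InnermostRewrite R s t → ParInnermost R s t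
  | congr (f : σ) (ss ts : List (Term σ V)) :
      Relation.TransGen (InnermostRewrite R) (Term.fn f ss) (Term.fn f ts) →
      ss.length = ts.length →
      -- each `sₖ ⇉ tₖ`, or `sₖ = tₖ` is a normal form (stated as the
      -- classically equivalent implication to satisfy the kernel's
      -- restrictions on nested inductive occurrences)
      (∀ p ∈ ss.zip ts, ¬ (p.1 = p.2 ∧ NormalForm R p.1) → ParInnermost R p.1 p.2) →
      ParInnermost R (Term.fn f ss) (Term.fn f ts)

/-! ## Abstract properties of relations -/

def Confluent {α : Type} (r : α → α → Prop) : Prop :=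
  ∀ s t u, Relation.ReflTransGen r s t → Relation.ReflTransGen r s u →
    ∃ v, Relation.ReflTransGen r t v ∧ Relation.ReflTransGen r u v

def Deterministic {α : Type} (r : α → α → Prop) : Prop :=
  ∀ s t u, r s t → r s u → t = u

def UniformlyConfluent {α : Type} (r : α → α → Prop) : Prop :=
  ∀ s t u, r s t → r s u → t = u ∨ ∃ v, r t v ∧ r u v

/-! ## Derivation height and runtime complexity -/

/-- `e`-th iterate of a relation. -/
def iterRel {α : Type} (r : α → α → Prop) : ℕ → α → α → Prop
  | 0 => fun a b => a = b
  | n + 1 => fun a c => ∃ b, r a b ∧ iterRel r n b c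

/-- Derivation height `Dh(t, →) = sup { e | ∃ t'. t →^e t' } ∈ ℕ ∪ {ω}`. -/
noncomputable def Dh {α : Type} (r : α → α → Prop) (t : α) : ℕ∞ :=
  sSup { e : ℕ∞ | ∃ n : ℕ, e = (n : ℕ∞) ∧ ∃ t', iterRel r n t t' }

/-- Defined symbols: root symbols of left-hand sides. -/
def Defined (R : Set (Rule σ V)) (f : σ) : Prop :=
  ∃ r ∈ R, ∃ ts : List (Term σ V), r.lhs = Term.fn f ts

def HasDefinedRoot (R : Set (Rule σ V)) (t : Term σ V) : Prop :=
  ∃ f ts, t = Term.fn f ts ∧ Defined R f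

/-- Constructor terms: terms over constructor symbols and variables. -/
inductive ConsTerm (R : Set (Rule σ V)) : Term σ V → Prop
  | var (x : V) : ConsTerm R (Term.var x)
  | fn (f : σ) (ts : List (Term σ V)) :
      ¬ Defined R f → (∀ t ∈ ts, ConsTerm R t) → ConsTerm R (Term.fn f ts)

/-- Basic terms: a defined symbol applied to constructor terms. -/
def BasicTerm (R : Set (Rule σ V)) (t : Term σ V) : Prop :=
  ∃ f ts, t = Term.fn f ts ∧ Defined R f ∧ ∀ u ∈ ts, ConsTerm R u

/-- Innermost runtime complexity. -/
noncomputable def irc (R : Set (Rule σ V)) (n : ℕ) : ℕ∞ :=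
  sSup { d : ℕ∞ | ∃ t, BasicTerm R t ∧ t.size ≤ n ∧ d = Dh (InnermostRewrite R) t }

/-- Parallel-innermost runtime complexity. -/
noncomputable def pirc (R : Set (Rule σ V)) (n : ℕ) : ℕ∞ :=
  sSup { d : ℕ∞ | ∃ t, BasicTerm R t ∧ t.size ≤ n ∧ d = Dh (ParInnermost R) t }

/-! ## Critical pairs -/

def RuleVars (r : Rule σ V) : Set V :=
  { x | Term.VarIn x r.lhs ∨ Term.VarIn x r.rhs }

/-- `r₂` is a variant of `r₁` (each is a substitution instance of the other). -/
def IsVariantOf (r₁ r₂ : Rule σ V) : Prop :=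
  ∃ θ₁ θ₂ : V → Term σ V,
    r₂.lhs = Term.subst θ₁ r₁.lhs ∧ r₂.rhs = Term.subst θ₁ r₁.rhs ∧
    r₁.lhs = Term.subst θ₂ r₂.lhs ∧ r₁.rhs = Term.subst θ₂ r₂.rhs

def Unifies (θ : V → Term σ V) (s t : Term σ V) : Prop :=
  Term.subst θ s = Term.subst θ t

def IsMGU (μ : V → Term σ V) (s t : Term σ V) : Prop :=
  Unifies μ s t ∧
    ∀ δ : V → Term σ V, Unifies δ s t →
      ∃ δ' : V → Term σ V, ∀ x : V, Term.subst δ' (μ x) = δ x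

/-- Critical pairs `⟨uσ[rσ]π, vσ⟩` of a TRS, from variable-renamed copies
`ℓ → r` and `u → v` of rules of `R` overlapping at a non-variable position
`π` of `u` (not a root overlap of variants of the same rule). -/
def CriticalPair (R : Set (Rule σ V)) (cp : Term σ V × Term σ V) : Prop :=
  ∃ r₁ r₂ r₁' r₂' : Rule σ V, r₁' ∈ R ∧ r₂' ∈ R ∧
    IsVariantOf r₁' r₁ ∧ IsVariantOf r₂' r₂ ∧
    (∀ x : V, x ∈ RuleVars r₁ → x ∉ RuleVars r₂) ∧
    ∃ (π : List ℕ) (u' : Term σ V),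
      r₂.lhs.subtermAt π = some u' ∧ ¬ u'.isVar ∧
      (π = [] → ¬ IsVariantOf r₁ r₂) ∧
      ∃ μ : V → Term σ V, IsMGU μ r₁.lhs u' ∧
        ∃ w : Term σ V,
          (Term.subst μ r₂.lhs).replaceAt π (Term.subst μ r₁.rhs) = some w ∧
          cp = (w, Term.subst μ r₂.rhs)

/-- `R` is non-overlapping iff it has no critical pairs. -/
def NonOverlapping (R : Set (Rule σ V)) : Prop := ∀ cp, ¬ CriticalPair R cp

/-- An innermost critical overlay: a critical pair at the root position whose
critical peak consists of two innermost rewrite steps. -/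
def InnermostCriticalOverlay (R : Set (Rule σ V)) (cp : Term σ V × Term σ V) : Prop :=
  ∃ r₁ r₂ r₁' r₂' : Rule σ V, r₁' ∈ R ∧ r₂' ∈ R ∧
    IsVariantOf r₁' r₁ ∧ IsVariantOf r₂' r₂ ∧
    (∀ x : V, x ∈ RuleVars r₁ → x ∉ RuleVars r₂) ∧
    ¬ IsVariantOf r₁ r₂ ∧
    ∃ μ : V → Term σ V, IsMGU μ r₁.lhs r₂.lhs ∧
      IsInnermostRedex R (Term.subst μ r₂.lhs) ∧
      cp = (Term.subst μ r₁.rhs, Term.subst μ r₂.rhs)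

/-! ## Positions with defined symbols and structural dependency chains -/

/-- Strict prefix order on positions: `PosGT τ π` iff `τ > π`,
i.e. `∃ π' ≠ ε, π π' = τ`. -/
def PosGT (τ π : List ℕ) : Prop := ∃ π' : List ℕ, π' ≠ [] ∧ π ++ π' = τ

/-- `PosD(t)`: positions of `t` with defined root symbol. -/
def PosD (R : Set (Rule σ V)) (t : Term σ V) : Set (List ℕ) :=
  { π | ∃ u, t.subtermAt π = some u ∧ HasDefinedRoot R u }

/-- Structural dependency chain `⟨π₁,…,πₖ⟩` for `t`: positions in `PosD(t)`
with `π₁ > … > πₖ`. -/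
def SDChain (R : Set (Rule σ V)) (t : Term σ V) (c : List (List ℕ)) : Prop :=
  (∀ π ∈ c, π ∈ PosD R t) ∧ c.Chain' PosGT

/-- Maximal structural dependency chains: `MSDC R t c` iff `c` is a maximal
structural dependency chain for `t`. -/
def MSDC (R : Set (Rule σ V)) (t : Term σ V) (c : List (List ℕ)) : Prop :=
  SDChain R t c ∧
    ((c = [] ∧ PosD R t = ∅) ∨
      ∃ (π₁ : List ℕ) (rest : List (List ℕ)), c = π₁ :: rest ∧
        ∀ π ∈ PosD R t, ¬ PosGT π π₁ ∧ (PosGT π₁ π → π ∈ rest))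

/-! ## Sharp terms, dependency tuples -/

/-- Extended signature: base symbols, sharp symbols `f#`, compound symbols `Com_n`. -/
inductive SharpSym (σ : Type) : Type where
  | base : σ → SharpSym σ
  | sharp : σ → SharpSym σ
  | com : ℕ → SharpSym σ

mutual
  def Term.embed : Term σ V → Term (SharpSym σ) V
    | Term.var x => Term.var x
    | Term.fn f ts => Term.fn (SharpSym.base f) (Term.embedList ts)
  def Term.embedList : List (Term σ V) → List (Term (SharpSym σ) V)
    | [] => []
    | t :: ts => Term.embed t :: Term.embedList ts
end

open Classical in
/-- `t#`: mark the root of `t` with its sharp symbol (if defined). -/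
noncomputable def Term.sharp (R : Set (Rule σ V)) : Term σ V → Term (SharpSym σ) V
  | Term.var x => Term.var x
  | Term.fn f ts =>
    if Defined R f then Term.fn (SharpSym.sharp f) (Term.embedList ts)
    else Term.fn (SharpSym.base f) (Term.embedList ts)

open Classical in
/-- Sharping on terms over the extended signature: for `t = f(…)` with `f` a
defined (base) symbol of `R`, mark the root; otherwise `t# = t`. -/
noncomputable def sharpC (R : Set (Rule σ V)) : Term (SharpSym σ) V → Term (SharpSym σ) V
  | Term.fn (SharpSym.base f) ts =>
    if Defined R f then Term.fn (SharpSym.sharp f) ts else Term.fn (SharpSym.base f) ts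
  | t => t

def liftRule (r : Rule σ V) : Rule (SharpSym σ) V :=
  { lhs := r.lhs.embed, rhs := r.rhs.embed }

def liftRules (R : Set (Rule σ V)) : Set (Rule (SharpSym σ) V) := liftRule '' R

/-- The dependency tuple `ℓ# → Com_k(u₁#,…,uₖ#)` built from subterms `u₁,…,uₖ`
of the right-hand side. -/
noncomputable def mkDT (R : Set (Rule σ V)) (ρ : Rule σ V) (us : List (Term σ V)) :
    Rule (SharpSym σ) V :=
  { lhs := Term.sharp R ρ.lhs,
    rhs := Term.fn (SharpSym.com us.length) (us.map (Term.sharp R)) }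

/-- `DTpar(ℓ → r)`: one dependency tuple per maximal structural dependency chain. -/
def DTparRule (R : Set (Rule σ V)) (ρ : Rule σ V) : Set (Rule (SharpSym σ) V) :=
  { d | ∃ (c : List (List ℕ)) (us : List (Term σ V)),
      MSDC R ρ.rhs c ∧
      List.Forall₂ (fun π u => ρ.rhs.subtermAt π = some u) c us ∧
      d = mkDT R ρ us }

/-- `DTpar(R)`. -/
def DTparSet (R : Set (Rule σ V)) : Set (Rule (SharpSym σ) V) :=
  ⋃ ρ ∈ R, DTparRule R ρ

/-! ## Chain trees and Cplx -/

/-- A (possibly infinite, finitely branching) tree whose nodes (addressed by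
paths) are labelled with a dependency tuple and a substitution; the child at
direction `i` corresponds to argument `i` of the `Com` symbol. -/
structure ChainTree (σ V : Type) where
  label : List ℕ → Option (Rule (SharpSym σ) V × (V → Term (SharpSym σ) V))

/-- `T` is a `(D,R)`-chain tree for the sharp term `t`. -/
def IsChainTree (D R : Set (Rule (SharpSym σ) V)) (T : ChainTree σ V)
    (t : Term (SharpSym σ) V) : Prop :=
  (∃ r ν, T.label [] = some (r, ν) ∧ Term.subst ν r.lhs = t) ∧
  (∀ (p : List ℕ) (i : ℕ), T.label (p ++ [i]) ≠ none → T.label p ≠ none) ∧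
  (∀ (p : List ℕ) (r : Rule (SharpSym σ) V) (ν : V → Term (SharpSym σ) V),
    T.label p = some (r, ν) →
      r ∈ D ∧ NormalForm R (Term.subst ν r.lhs) ∧
      ∀ (i : ℕ) (r' : Rule (SharpSym σ) V) (δ : V → Term (SharpSym σ) V),
        T.label (p ++ [i]) = some (r', δ) →
          ∃ (m : ℕ) (vs : List (Term (SharpSym σ) V)),
            r.rhs = Term.fn (SharpSym.com m) vs ∧
            ∃ v, vs[i]? = some v ∧
              Relation.ReflTransGen (InnermostRewrite R)
                (Term.subst ν v) (Term.subst δ r'.lhs))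

/-- `|T|_S`: the number of nodes of `T` labelled with a DT from `S`. -/
noncomputable def treeCount (T : ChainTree σ V) (S : Set (Rule (SharpSym σ) V)) : ℕ∞ :=
  Set.encard { p : List ℕ | ∃ r ν, T.label p = some (r, ν) ∧ r ∈ S }

/-- `Cplx⟨D,S,R⟩(t)`: the supremum of `|T|_S` over all `(D,R)`-chain trees `T`
for `t` (`0` if there is no chain tree). -/
noncomputable def Cplx (D S R : Set (Rule (SharpSym σ) V))
    (t : Term (SharpSym σ) V) : ℕ∞ :=
  sSup { c : ℕ∞ | ∃ T : ChainTree σ V, IsChainTree D R T t ∧ c = treeCount T S }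

/-- `irc⟨D,S,R⟩(n)`: runtime complexity of a DT problem. -/
noncomputable def ircDTP (D S : Set (Rule (SharpSym σ) V)) (R : Set (Rule σ V))
    (n : ℕ) : ℕ∞ :=
  sSup { c : ℕ∞ | ∃ t : Term σ V, BasicTerm R t ∧ t.size ≤ n ∧
    c = Cplx D S (liftRules R) (Term.sharp R t) }

/-! ## Relative rewriting -/

/-- An innermost rewrite step using a rule from `X`, with innermost-ness
relative to the whole system `W`. -/
def InnermostRewriteSub (W X : Set (Rule σ V)) (s t : Term σ V) : Prop :=
  ∃ π, ∃ r ∈ X, ∃ θ : V → Term σ V,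
    s.subtermAt π = some (Term.subst θ r.lhs) ∧
    IsInnermostRedex W (Term.subst θ r.lhs) ∧
    s.replaceAt π (Term.subst θ r.rhs) = some t

/-- Innermost relative rewriting `→i_{A/B}`:
`s →B* s' →A s'' →B* t`, all steps innermost wrt `A ∪ B`. -/
def RelInnermost (A B : Set (Rule σ V)) (s t : Term σ V) : Prop :=
  ∃ s' s'' : Term σ V,
    Relation.ReflTransGen (InnermostRewriteSub (A ∪ B) B) s s' ∧
    InnermostRewriteSub (A ∪ B) A s' s'' ∧
    Relation.ReflTransGen (InnermostRewriteSub (A ∪ B) B) s'' t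

/-- Innermost runtime complexity of a relative TRS `A/B`. -/
noncomputable def ircRel (A B : Set (Rule σ V)) (n : ℕ) : ℕ∞ :=
  sSup { d : ℕ∞ | ∃ t : Term σ V, BasicTerm (A ∪ B) t ∧ t.size ≤ n ∧
    d = Dh (RelInnermost A B) t }

/-! ## Dependency tuples (abstract DT problems) -/

inductive IsBaseTerm : Term (SharpSym σ) V → Prop
  | var (x : V) : IsBaseTerm (Term.var x)
  | fn (f : σ) (ts : List (Term (SharpSym σ) V)) :
      (∀ t ∈ ts, IsBaseTerm t) → IsBaseTerm (Term.fn (SharpSym.base f) ts)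

def IsSharpTerm (t : Term (SharpSym σ) V) : Prop :=
  ∃ (f : σ) (args : List (Term (SharpSym σ) V)),
    t = Term.fn (SharpSym.sharp f) args ∧ ∀ a ∈ args, IsBaseTerm a

/-- A dependency tuple: a rule `s# → Com_n(t₁#,…,tₙ#)`. -/
def IsDT (r : Rule (SharpSym σ) V) : Prop :=
  IsSharpTerm r.lhs ∧
    ∃ (n : ℕ) (ts : List (Term (SharpSym σ) V)),
      r.rhs = Term.fn (SharpSym.com n) ts ∧ ts.length = n ∧ ∀ t ∈ ts, IsSharpTerm t

/-! ## Argument normal forms -/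

/-- Argument normal form: a variable, or a term all of whose direct arguments
are normal forms. -/
def ArgNF (R : Set (Rule σ V)) (t : Term σ V) : Prop :=
  (∃ x, t = Term.var x) ∨ ∃ f ts, t = Term.fn f ts ∧ ∀ u ∈ ts, NormalForm R u

/-- A parallel-innermost step all of whose rewrites are at positions strictly
below the root. -/
def ParInnermostBelow (R : Set (Rule σ V)) (s t : Term σ V) : Prop :=
  ParInnermost R s t ∧ ¬ IsInnermostRedex R s

/-- `b` is a maximal parallel argument normal form of `u`. -/
noncomputable def MaxANF (R : Set (Rule σ V)) (u b : Term σ V) : Prop :=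
  ArgNF R b ∧ Relation.ReflTransGen (ParInnermostBelow R) u b ∧
    ∀ u', ArgNF R u' → Relation.ReflTransGen (ParInnermostBelow R) u u' →
      Dh (ParInnermost R) u' ≤ Dh (ParInnermost R) b

/-! ## Many-sorted type assignments -/

/-- Well-typedness of a term wrt a sort set `St`, a type assignment `arty`
(argument sorts and result sort for each symbol) and variable typing `vty`. -/
inductive WellTyped {τ : Type} (St : Type) (arty : τ → List St × St) (vty : V → St) :
    Term τ V → St → Prop
  | var (x : V) : WellTyped St arty vty (Term.var x) (vty x)
  | fn (f : τ) (ts : List (Term τ V)) :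
      ts.length = (arty f).1.length →
      (∀ p ∈ ts.zip (arty f).1, WellTyped St arty vty p.1 p.2) →
      WellTyped St arty vty (Term.fn f ts) (arty f).2

/-- A strict total order on positions extending the strict prefix order. -/
def TotalExtOfPrefix (gt' : List ℕ → List ℕ → Prop) : Prop :=
  (∀ π τ, PosGT π τ → gt' π τ) ∧
  (∀ π τ ρ, gt' π τ → gt' τ ρ → gt' π ρ) ∧
  (∀ π τ, gt' π τ → ¬ gt' τ π) ∧
  (∀ π τ, π ≠ τ → gt' π τ ∨ gt' τ π)


/-! ## Auxiliary development for Statement 5 -/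

section Aux5

lemma substList_eq_map (θ : V → Term σ V) (ts : List (Term σ V)) :
    Term.substList θ ts = ts.map (Term.subst θ) := by
  induction ts with
  | nil => rfl
  | cons t ts ih => simp [Term.substList, ih]

lemma subst_fn (θ : V → Term σ V) (f : σ) (ts : List (Term σ V)) :
    Term.subst θ (Term.fn f ts) = Term.fn f (ts.map (Term.subst θ)) := by
  rw [show Term.subst θ (Term.fn f ts) = Term.fn f (Term.substList θ ts) from rfl,
    substList_eq_map]

lemma sizeList_eq_sum (ts : List (Term σ V)) :
    Term.sizeList ts = (ts.map Term.size).sum := by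
  induction ts with
  | nil => rfl
  | cons t ts ih => simp [Term.sizeList, ih]

lemma one_le_size (t : Term σ V) : 1 ≤ t.size := by
  cases t with
  | var x => simp [Term.size]
  | fn f ts => simp [Term.size]

@[simp] lemma subtermAt_nil (t : Term σ V) : t.subtermAt [] = some t := by
  cases t <;> rfl

lemma subtermAt_var_cons (x : V) (i : ℕ) (p : List ℕ) :
    (Term.var x : Term σ V).subtermAt (i :: p) = none := rfl

lemma subtermAt_cons (f : σ) (ts : List (Term σ V)) (i : ℕ) (p : List ℕ) :
    (Term.fn f ts).subtermAt (i :: p) =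
      match ts[i]? with
      | none => none
      | some u => u.subtermAt p := rfl

lemma subtermAt_fn_arg {f : σ} {ts : List (Term σ V)} {i : ℕ} {u : Term σ V}
    (h : ts[i]? = some u) (p : List ℕ) :
    (Term.fn f ts).subtermAt (i :: p) = u.subtermAt p := by
  rw [subtermAt_cons, h]

lemma subtermAt_cons_none {f : σ} {ts : List (Term σ V)} {i : ℕ}
    (h : ts[i]? = none) (p : List ℕ) :
    (Term.fn f ts).subtermAt (i :: p) = none := by
  rw [subtermAt_cons, h]

@[simp] lemma replaceAt_nil (t v : Term σ V) : t.replaceAt [] v = some v := by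
  cases t <;> rfl

lemma replaceAt_var_cons (x : V) (i : ℕ) (p : List ℕ) (v : Term σ V) :
    (Term.var x : Term σ V).replaceAt (i :: p) v = none := rfl

lemma replaceAt_cons (f : σ) (ts : List (Term σ V)) (i : ℕ) (p : List ℕ) (v : Term σ V) :
    (Term.fn f ts).replaceAt (i :: p) v =
      match ts[i]? with
      | none => none
      | some u =>
        match u.replaceAt p v with
        | none => none
        | some u' => some (Term.fn f (ts.set i u')) := rfl

lemma replaceAt_cons_none {f : σ} {ts : List (Term σ V)} {i : ℕ}
    (h : ts[i]? = none) (p : List ℕ) (v : Term σ V) :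
    (Term.fn f ts).replaceAt (i :: p) v = none := by
  rw [replaceAt_cons, h]

lemma replaceAt_fn_arg_eq {f : σ} {ts : List (Term σ V)} {i : ℕ} {u : Term σ V}
    (h : ts[i]? = some u) (p : List ℕ) (v : Term σ V) :
    (Term.fn f ts).replaceAt (i :: p) v =
      match u.replaceAt p v with
      | none => none
      | some u' => some (Term.fn f (ts.set i u')) := by
  rw [replaceAt_cons, h]

lemma replaceAt_fn_arg {f : σ} {ts : List (Term σ V)} {i : ℕ} {u u' : Term σ V}
    (h : ts[i]? = some u) {p : List ℕ} {v : Term σ V}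
    (h2 : u.replaceAt p v = some u') :
    (Term.fn f ts).replaceAt (i :: p) v = some (Term.fn f (ts.set i u')) := by
  rw [replaceAt_fn_arg_eq h, h2]

lemma subtermAt_append : ∀ (p q : List ℕ) (t : Term σ V),
    t.subtermAt (p ++ q) = (t.subtermAt p).bind (fun u => u.subtermAt q) := by
  intro p
  induction p with
  | nil => intro q t; simp
  | cons i p ih =>
    intro q t
    cases t with
    | var x => simp [subtermAt_var_cons]
    | fn f ts =>
      cases hts : ts[i]? with
      | none =>
        rw [List.cons_append, subtermAt_cons_none hts, subtermAt_cons_none hts]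
        rfl
      | some u =>
        rw [List.cons_append, subtermAt_fn_arg hts, subtermAt_fn_arg hts, ih]

lemma subtermAt_length_lt_size : ∀ (p : List ℕ) (t u : Term σ V),
    t.subtermAt p = some u → p.length < t.size := by
  intro p
  induction p with
  | nil => intro t u _; exact one_le_size t
  | cons i q ih =>
    intro t u h
    cases t with
    | var x => rw [subtermAt_var_cons] at h; cases h
    | fn f ts =>
      cases hts : ts[i]? with
      | none => rw [subtermAt_cons_none hts] at h; cases h
      | some u₀ =>
        rw [subtermAt_fn_arg hts] at h
        have h1 := ih u₀ u h
        have h2 : u₀.size ≤ Term.sizeList ts := by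
          rw [sizeList_eq_sum]
          exact List.le_sum_of_mem (List.mem_map_of_mem (List.mem_of_getElem? hts))
        simp only [Term.size, List.length_cons]
        omega

lemma replaceAt_isSome : ∀ (p : List ℕ) (t u : Term σ V), t.subtermAt p = some u →
    ∀ v, ∃ t', t.replaceAt p v = some t' := by
  intro p
  induction p with
  | nil => intro t u _ v; exact ⟨v, by simp⟩
  | cons i q ih =>
    intro t u h v
    cases t with
    | var x => rw [subtermAt_var_cons] at h; cases h
    | fn f ts =>
      cases hts : ts[i]? with
      | none => rw [subtermAt_cons_none hts] at h; cases h
      | some u₀ =>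
        rw [subtermAt_fn_arg hts] at h
        obtain ⟨u', hu'⟩ := ih u₀ u h v
        exact ⟨_, replaceAt_fn_arg hts hu'⟩

lemma getElem?_some_lt {α : Type*} {ts : List α} {i : ℕ} {u : α}
    (h : ts[i]? = some u) : i < ts.length := by
  by_contra hle
  rw [List.getElem?_eq_none (by omega)] at h
  cases h

lemma subtermAt_replaceAt_self : ∀ (p : List ℕ) (t v t' : Term σ V),
    t.replaceAt p v = some t' → t'.subtermAt p = some v := by
  intro p
  induction p with
  | nil =>
    intro t v t' h
    rw [replaceAt_nil] at h
    injection h with h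
    rw [← h, subtermAt_nil]
  | cons i q ih =>
    intro t v t' h
    cases t with
    | var x => rw [replaceAt_var_cons] at h; cases h
    | fn f ts =>
      cases hts : ts[i]? with
      | none => rw [replaceAt_cons_none hts] at h; cases h
      | some u₀ =>
        rw [replaceAt_fn_arg_eq hts] at h
        cases hrep : u₀.replaceAt q v with
        | none => rw [hrep] at h; cases h
        | some u' =>
          rw [hrep] at h
          injection h with h
          rw [← h]
          have hlen : i < ts.length := getElem?_some_lt hts
          rw [subtermAt_fn_arg (List.getElem?_set_self (by simpa using hlen) :
            (ts.set i u')[i]? = some u')]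
          exact ih u₀ v u' hrep

lemma subtermAt_replaceAt_off : ∀ (p : List ℕ) (t v t' : Term σ V) (q : List ℕ),
    t.replaceAt p v = some t' → ¬ p <+: q → ¬ q <+: p →
    t'.subtermAt q = t.subtermAt q := by
  intro p
  induction p with
  | nil => intro t v t' q _ hpq _; exact absurd List.nil_prefix hpq
  | cons i p ih =>
    intro t v t' q h hpq hqp
    cases t with
    | var x => rw [replaceAt_var_cons] at h; cases h
    | fn f ts =>
      cases hts : ts[i]? with
      | none => rw [replaceAt_cons_none hts] at h; cases h
      | some u₀ =>
        rw [replaceAt_fn_arg_eq hts] at h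
        cases hrep : u₀.replaceAt p v with
        | none => rw [hrep] at h; cases h
        | some u' =>
          rw [hrep] at h
          injection h with h
          rw [← h]
          cases q with
          | nil => exact absurd List.nil_prefix hqp
          | cons j q' =>
            by_cases hij : j = i
            · subst hij
              have hlen : j < ts.length := getElem?_some_lt hts
              rw [subtermAt_fn_arg (List.getElem?_set_self (by simpa using hlen) :
                  (ts.set j u')[j]? = some u'), subtermAt_fn_arg hts]
              exact ih u₀ v u' q' hrep
                (fun hc => hpq (by rw [List.cons_prefix_cons]; exact ⟨rfl, hc⟩))
                (fun hc => hqp (by rw [List.cons_prefix_cons]; exact ⟨rfl, hc⟩))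
            · rw [subtermAt_cons, subtermAt_cons,
                List.getElem?_set_ne (fun hh => hij hh.symm)]

lemma subst_subtermAt (θ : V → Term σ V) : ∀ (p : List ℕ) (t u : Term σ V),
    t.subtermAt p = some u → (Term.subst θ t).subtermAt p = some (Term.subst θ u) := by
  intro p
  induction p with
  | nil =>
    intro t u h
    rw [subtermAt_nil] at h
    injection h with h
    rw [h, subtermAt_nil]
  | cons i p ih =>
    intro t u h
    cases t with
    | var x => rw [subtermAt_var_cons] at h; cases h
    | fn f ts =>
      cases hts : ts[i]? with
      | none => rw [subtermAt_cons_none hts] at h; cases h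
      | some u₀ =>
        rw [subtermAt_fn_arg hts] at h
        rw [subst_fn]
        rw [subtermAt_fn_arg (show (ts.map (Term.subst θ))[i]? = some (Term.subst θ u₀) by
          rw [List.getElem?_map, hts]; rfl)]
        exact ih u₀ u h

lemma varIn_of_subtermAt : ∀ (p : List ℕ) (t : Term σ V) (x : V),
    t.subtermAt p = some (Term.var x) → Term.VarIn x t := by
  intro p
  induction p with
  | nil =>
    intro t x h
    rw [subtermAt_nil] at h
    injection h with h
    rw [h]
    exact Term.VarIn.var
  | cons i p ih =>
    intro t x h
    cases t with
    | var y => rw [subtermAt_var_cons] at h; cases h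
    | fn f ts =>
      cases hts : ts[i]? with
      | none => rw [subtermAt_cons_none hts] at h; cases h
      | some u₀ =>
        rw [subtermAt_fn_arg hts] at h
        exact Term.VarIn.fn (List.mem_of_getElem? hts) (ih u₀ x h)

lemma pos_of_varIn {x : V} : ∀ {t : Term σ V}, Term.VarIn x t →
    ∃ p, t.subtermAt p = some (Term.var x) := by
  intro t h
  induction h with
  | var => exact ⟨[], by rw [subtermAt_nil]⟩
  | @fn f ts u hmem _ ih =>
    obtain ⟨p, hp⟩ := ih
    obtain ⟨i, hi, hgi⟩ := List.mem_iff_getElem.mp hmem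
    refine ⟨i :: p, ?_⟩
    rw [subtermAt_fn_arg (show ts[i]? = some u by rw [List.getElem?_eq_getElem hi, hgi])]
    exact hp

/-- `t` has a redex at position `p`. -/
def HasRedexAt (R : Set (Rule σ V)) (t : Term σ V) (p : List ℕ) : Prop :=
  ∃ u, t.subtermAt p = some u ∧ IsRedex R u

lemma rewrite_of_hasRedexAt {R : Set (Rule σ V)} {t : Term σ V} {p : List ℕ}
    (h : HasRedexAt R t p) : ∃ u, Rewrite R t u := by
  obtain ⟨u, hsub, r, hr, θ, rfl⟩ := h
  obtain ⟨t', ht'⟩ := replaceAt_isSome p t _ hsub (Term.subst θ r.rhs)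
  exact ⟨t', p, r, hr, θ, hsub, ht'⟩

lemma hasRedexAt_of_rewrite {R : Set (Rule σ V)} {s t : Term σ V}
    (h : Rewrite R s t) : ∃ p, HasRedexAt R s p := by
  obtain ⟨p, r, hr, θ, hsub, _⟩ := h
  exact ⟨p, _, hsub, r, hr, θ, rfl⟩

lemma normalForm_of_no_redex {R : Set (Rule σ V)} {t : Term σ V}
    (h : ∀ p, ¬ HasRedexAt R t p) : NormalForm R t := by
  rintro ⟨u, hu⟩
  obtain ⟨p, hp⟩ := hasRedexAt_of_rewrite hu
  exact h p hp

lemma hasRedexAt_append {R : Set (Rule σ V)} {t u : Term σ V} {p q : List ℕ}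
    (hsub : t.subtermAt p = some u) (h : HasRedexAt R u q) : HasRedexAt R t (p ++ q) := by
  obtain ⟨w, hw, hred⟩ := h
  refine ⟨w, ?_, hred⟩
  rw [subtermAt_append, hsub]
  exact hw

lemma redex_shape {R : Set (Rule σ V)} (hR : IsWfTRS R) {w : Term σ V} (h : IsRedex R w) :
    ∃ g ws, w = Term.fn g ws ∧ Defined R g := by
  obtain ⟨r, hr, θ, hw⟩ := h
  cases hl : r.lhs with
  | var x => exact absurd ⟨x, hl⟩ (hR.2.1 r hr)
  | fn g args =>
    refine ⟨g, args.map (Term.subst θ), ?_, r, hr, args, hl⟩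
    rw [hw, hl, subst_fn]

lemma consTerm_subterm {R : Set (Rule σ V)} : ∀ (p : List ℕ) (t u : Term σ V),
    ConsTerm R t → t.subtermAt p = some u → ConsTerm R u := by
  intro p
  induction p with
  | nil =>
    intro t u hc h
    rw [subtermAt_nil] at h
    injection h with h
    rw [← h]; exact hc
  | cons i p ih =>
    intro t u hc h
    cases hc with
    | var x => rw [subtermAt_var_cons] at h; cases h
    | fn f ts hdef hts' =>
      cases hts : ts[i]? with
      | none => rw [subtermAt_cons_none hts] at h; cases h
      | some u₀ =>
        rw [subtermAt_fn_arg hts] at h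
        exact ih u₀ u (hts' u₀ (List.mem_of_getElem? hts)) h

lemma consTerm_not_redex {R : Set (Rule σ V)} (hR : IsWfTRS R) {u : Term σ V}
    (hc : ConsTerm R u) : ¬ IsRedex R u := by
  intro h
  obtain ⟨g, ws, rfl, hg⟩ := redex_shape hR h
  cases hc with
  | fn _ _ hdef _ => exact hdef hg

lemma posGT_iff {τ π : List ℕ} : PosGT τ π ↔ π <+: τ ∧ π ≠ τ := by
  constructor
  · rintro ⟨e, he, rfl⟩
    exact ⟨π.prefix_append e, by simp [List.self_eq_append_right, he]⟩
  · rintro ⟨⟨e, rfl⟩, hne⟩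
    exact ⟨e, fun h => hne (by simp [h]), rfl⟩

lemma posGT_take {d : List ℕ} {a b : ℕ} (hab : a < b) (hb : b ≤ d.length) :
    PosGT (d.take b) (d.take a) := by
  rw [posGT_iff]
  refine ⟨?_, ?_⟩
  · rw [show d.take a = (d.take b).take a by rw [List.take_take, min_eq_left hab.le]]
    exact List.take_prefix _ _
  · intro h
    have := congrArg List.length h
    rw [List.length_take, List.length_take] at this
    omega

lemma exists_deep {R : Set (Rule σ V)} {t : Term σ V} (p : List ℕ) (hp : p ∈ PosD R t) :
    ∃ d, d ∈ PosD R t ∧ p <+: d ∧ ∀ π ∈ PosD R t, ¬ PosGT π d := by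
  classical
  set P : ℕ → Prop := fun k => ∃ ρ, ρ ∈ PosD R t ∧ p <+: ρ ∧ ρ.length = k with hPdef
  have hlen : ∀ ρ, ρ ∈ PosD R t → ρ.length < t.size := by
    rintro ρ ⟨u, hu, _⟩
    exact subtermAt_length_lt_size ρ t u hu
  have hPp : P p.length := ⟨p, hp, List.prefix_refl p, rfl⟩
  obtain ⟨d, hd, hpd, hdlen⟩ : P (Nat.findGreatest P t.size) :=
    Nat.findGreatest_spec (le_of_lt (hlen p hp)) hPp
  refine ⟨d, hd, hpd, ?_⟩
  rintro π hπ ⟨e, he, rfl⟩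
  have h0 : 0 < e.length := List.length_pos_iff.mpr he
  have hgt : Nat.findGreatest P t.size < (d ++ e).length := by
    simp only [List.length_append]
    omega
  exact Nat.findGreatest_is_greatest hgt (le_of_lt (hlen _ hπ))
    ⟨d ++ e, hπ, hpd.trans (d.prefix_append e), rfl⟩

open Classical in
lemma msdc_head {R : Set (Rule σ V)} {t : Term σ V} {d : List ℕ}
    (hd : d ∈ PosD R t) (hmax : ∀ π ∈ PosD R t, ¬ PosGT π d) :
    ∃ rest, MSDC R t (d :: rest) := by
  classical
  set rest : List (List ℕ) := ((List.range d.length).reverse.map (fun k => d.take k)).filter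
      (fun p => decide (p ∈ PosD R t)) with hrest
  have hmem : ∀ p, p ∈ rest ↔ (∃ k, k < d.length ∧ d.take k = p) ∧ p ∈ PosD R t := by
    intro p
    rw [hrest]
    simp [List.mem_filter, List.mem_map, List.mem_reverse, List.mem_range]
  refine ⟨rest, ⟨⟨?_, ?_⟩, Or.inr ⟨d, rest, rfl, ?_⟩⟩⟩
  · intro π hπ
    rcases List.mem_cons.mp hπ with rfl | hπ
    · exact hd
    · exact ((hmem π).mp hπ).2
  · apply List.Pairwise.isChain
    rw [List.pairwise_cons]
    constructor
    · intro b hb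
      obtain ⟨⟨k, hk, rfl⟩, _⟩ := (hmem b).mp hb
      have := posGT_take hk (le_refl d.length)
      rwa [List.take_length] at this
    · apply List.Pairwise.filter
      rw [List.pairwise_map, List.pairwise_reverse]
      exact List.Pairwise.imp_of_mem
        (fun {a b} ha hb hab => posGT_take hab (le_of_lt (List.mem_range.mp hb)))
        (List.pairwise_lt_range (n := d.length))
  · intro π hπ
    refine ⟨hmax π hπ, ?_⟩
    intro hgt
    obtain ⟨hpre, hne⟩ := posGT_iff.mp hgt
    rw [hmem]
    refine ⟨⟨π.length, ?_, ?_⟩, hπ⟩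
    · have hle := hpre.length_le
      rcases lt_or_eq_of_le hle with h | h
      · exact h
      · exact absurd (hpre.eq_of_length h) hne
    · exact (List.prefix_iff_eq_take.mp hpre).symm

lemma posD_comparable {R : Set (Rule σ V)} {t : Term σ V}
    (hu : ∃! c : List (List ℕ), MSDC R t c) :
    ∀ p ∈ PosD R t, ∀ q ∈ PosD R t, p <+: q ∨ q <+: p := by
  intro p hp q hq
  obtain ⟨dp, hdp, hpd, hmaxp⟩ := exists_deep p hp
  obtain ⟨dq, hdq, hqd, hmaxq⟩ := exists_deep q hq
  obtain ⟨restp, hcp⟩ := msdc_head hdp hmaxp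
  obtain ⟨restq, hcq⟩ := msdc_head hdq hmaxq
  obtain ⟨c, _, huniq⟩ := hu
  have heq : dp :: restp = dq :: restq := (huniq _ hcp).trans (huniq _ hcq).symm
  have hdd : dp = dq := by injection heq
  exact List.prefix_or_prefix_of_prefix hpd (hdd ▸ hqd)

lemma subst_subterm_cases (θ : V → Term σ V) :
    ∀ (p : List ℕ) (r w : Term σ V), (Term.subst θ r).subtermAt p = some w →
      (∃ ρ q x, ρ ++ q = p ∧ r.subtermAt ρ = some (Term.var x) ∧
        (θ x).subtermAt q = some w) ∨
      (∃ u, r.subtermAt p = some u ∧ ¬ u.isVar ∧ w = Term.subst θ u) := by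
  intro p
  induction p with
  | nil =>
    intro r w h
    rw [subtermAt_nil] at h
    injection h with h
    cases r with
    | var x =>
      refine Or.inl ⟨[], [], x, rfl, by rw [subtermAt_nil], ?_⟩
      rw [subtermAt_nil, ← h]
      rfl
    | fn f ts =>
      refine Or.inr ⟨Term.fn f ts, by rw [subtermAt_nil], ?_, h.symm⟩
      rintro ⟨y, hy⟩
      cases hy
  | cons i p ih =>
    intro r w h
    cases r with
    | var x =>
      exact Or.inl ⟨[], i :: p, x, rfl, by rw [subtermAt_nil], h⟩
    | fn f ts =>
      rw [subst_fn] at h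
      cases hts : ts[i]? with
      | none =>
        rw [subtermAt_cons_none (show (ts.map (Term.subst θ))[i]? = none by
          rw [List.getElem?_map, hts]; rfl)] at h
        cases h
      | some u₀ =>
        rw [subtermAt_fn_arg (show (ts.map (Term.subst θ))[i]? = some (Term.subst θ u₀) by
          rw [List.getElem?_map, hts]; rfl)] at h
        rcases ih u₀ w h with ⟨ρ, q, x, hsum, hvar, hsub'⟩ | ⟨u, hu, hnv, hwu⟩
        · refine Or.inl ⟨i :: ρ, q, x, by rw [← hsum]; rfl,
            by rw [subtermAt_fn_arg hts]; exact hvar, hsub'⟩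
        · exact Or.inr ⟨u, by rw [subtermAt_fn_arg hts]; exact hu, hnv, hwu⟩

lemma no_redex_in_theta {R : Set (Rule σ V)} (hR : IsWfTRS R) {r : Rule σ V} (hr : r ∈ R)
    {θ : V → Term σ V} (hin : IsInnermostRedex R (Term.subst θ r.lhs))
    {x : V} (hx : Term.VarIn x r.rhs) {q : List ℕ} {w : Term σ V}
    (hw : (θ x).subtermAt q = some w) : ¬ IsRedex R w := by
  have hxl : Term.VarIn x r.lhs := hR.2.2 r hr x hx
  obtain ⟨p, hp⟩ := pos_of_varIn hxl
  have hp' := subst_subtermAt θ p r.lhs _ hp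
  rw [show Term.subst θ (Term.var x) = θ x from rfl] at hp'
  have hpne : p ≠ [] := by
    intro h
    subst h
    rw [subtermAt_nil] at hp
    injection hp with hp
    exact hR.2.1 r hr ⟨x, hp⟩
  have hsub : (Term.subst θ r.lhs).subtermAt (p ++ q) = some w := by
    rw [subtermAt_append, hp']
    exact hw
  exact hin.2 (p ++ q) (fun hnil => hpne (List.append_eq_nil_iff.mp hnil).1) w hsub

lemma parInnermost_of_aux {R : Set (Rule σ V)} {r : Rule σ V} (hr : r ∈ R)
    (θ : V → Term σ V) :
    ∀ (π : List ℕ) (s t : Term σ V),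
      s.subtermAt π = some (Term.subst θ r.lhs) →
      IsInnermostRedex R (Term.subst θ r.lhs) →
      s.replaceAt π (Term.subst θ r.rhs) = some t →
      (∀ q, HasRedexAt R s q → q <+: π) →
      ParInnermost R s t := by
  intro π
  induction π with
  | nil =>
    intro s t hsub hin hrep _
    rw [subtermAt_nil] at hsub
    injection hsub with hs
    rw [replaceAt_nil] at hrep
    injection hrep with ht
    have hstep : InnermostRewrite R s t :=
      ⟨[], r, hr, θ, by rw [subtermAt_nil, hs], hin, by rw [replaceAt_nil, ht]⟩
    exact ParInnermost.redex (Relation.TransGen.single hstep) (hs ▸ hin) hstep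
  | cons i π ih =>
    intro s t hsub hin hrep hbound
    cases s with
    | var x => rw [subtermAt_var_cons] at hsub; cases hsub
    | fn f ss =>
      cases hts : ss[i]? with
      | none => rw [subtermAt_cons_none hts] at hsub; cases hsub
      | some sᵢ =>
        rw [subtermAt_fn_arg hts] at hsub
        rw [replaceAt_fn_arg_eq hts] at hrep
        cases hrep' : sᵢ.replaceAt π (Term.subst θ r.rhs) with
        | none => rw [hrep'] at hrep; cases hrep
        | some sᵢ' =>
          rw [hrep'] at hrep
          injection hrep with ht
          subst ht
          have hlen : i < ss.length := getElem?_some_lt hts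
          have hstep : InnermostRewrite R (Term.fn f ss) (Term.fn f (ss.set i sᵢ')) :=
            ⟨i :: π, r, hr, θ, by rw [subtermAt_fn_arg hts]; exact hsub, hin,
              replaceAt_fn_arg hts hrep'⟩
          refine ParInnermost.congr f ss (ss.set i sᵢ') (Relation.TransGen.single hstep)
            (by simp) ?_
          intro pr hpr hnp
          obtain ⟨j, hj, hjp⟩ := List.mem_iff_getElem.mp hpr
          rw [List.getElem_zip] at hjp
          have hjlen : j < ss.length := by
            have := hj
            simp only [List.length_zip, List.length_set, min_self] at this
            exact this
          by_cases hji : j = i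
          · subst hji
            have h1 : ss[j] = sᵢ := by
              have hh := List.getElem?_eq_getElem hjlen
              rw [hts] at hh
              injection hh with hh
              exact hh.symm
            have h2 : (ss.set j sᵢ')[j]'(by simpa using hjlen) = sᵢ' := by
              rw [List.getElem_set, if_pos rfl]
            have hp1 : pr.1 = sᵢ := by rw [← hjp]; exact h1
            have hp2 : pr.2 = sᵢ' := by rw [← hjp]; exact h2
            rw [hp1, hp2]
            apply ih sᵢ sᵢ' hsub hin hrep'
            intro q hq
            have hq' : HasRedexAt R (Term.fn f ss) (j :: q) := by
              obtain ⟨w, hw, hred⟩ := hq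
              exact ⟨w, by rw [subtermAt_fn_arg hts]; exact hw, hred⟩
            have hb := hbound _ hq'
            rw [List.cons_prefix_cons] at hb
            exact hb.2
          · exfalso
            apply hnp
            have hset : (ss.set i sᵢ')[j]'(by simpa using hjlen) = ss[j]'hjlen := by
              rw [List.getElem_set, if_neg (fun hh => hji hh.symm)]
            have hp1 : pr.1 = ss[j]'hjlen := by rw [← hjp]
            have hp2 : pr.2 = ss[j]'hjlen := by rw [← hjp]; exact hset
            refine ⟨by rw [hp1, hp2], ?_⟩
            rw [hp1]
            apply normalForm_of_no_redex
            intro q hq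
            have hjq : HasRedexAt R (Term.fn f ss) (j :: q) := by
              obtain ⟨w, hw, hred⟩ := hq
              refine ⟨w, ?_, hred⟩
              rw [subtermAt_fn_arg (List.getElem?_eq_getElem hjlen)]
              exact hw
            have hb := hbound _ hjq
            rw [List.cons_prefix_cons] at hb
            exact hji hb.1

lemma redexChain_step {R : Set (Rule σ V)} (hR : IsWfTRS R)
    (hOne : ∀ ρ ∈ R, ∃! c : List (List ℕ), MSDC R ρ.rhs c)
    {s t : Term σ V}
    (hQ : ∀ p q, HasRedexAt R s p → HasRedexAt R s q → p <+: q ∨ q <+: p)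
    (h : InnermostRewrite R s t) :
    ∀ p q, HasRedexAt R t p → HasRedexAt R t q → p <+: q ∨ q <+: p := by
  obtain ⟨π, r, hr, θ, hsub, hin, hrep⟩ := h
  have hchain := posD_comparable (hOne r hr)
  have ht_at : t.subtermAt π = some (Term.subst θ r.rhs) :=
    subtermAt_replaceAt_self π s _ t hrep
  have hclass : ∀ q, HasRedexAt R t q →
      q <+: π ∨ ∃ ρ', ρ' ∈ PosD R r.rhs ∧ q = π ++ ρ' := by
    intro q hq
    by_cases h1 : q <+: π
    · exact Or.inl h1
    by_cases h2 : π <+: q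
    · obtain ⟨ρ', rfl⟩ := h2
      obtain ⟨w, hw, hwred⟩ := hq
      have hw' : (Term.subst θ r.rhs).subtermAt ρ' = some w := by
        rw [subtermAt_append, ht_at] at hw
        exact hw
      rcases subst_subterm_cases θ ρ' r.rhs w hw' with
        ⟨ρ₀, q₀, x, hsum, hvar, hsub'⟩ | ⟨u, hu, hnv, hwu⟩
      · exact absurd hwred
          (no_redex_in_theta hR hr hin (varIn_of_subtermAt ρ₀ _ x hvar) hsub')
      · refine Or.inr ⟨ρ', ?_, rfl⟩
        obtain ⟨g, ws, hwg, hg⟩ := redex_shape hR hwred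
        cases u with
        | var y => exact absurd ⟨y, rfl⟩ hnv
        | fn g' us =>
          have hg' : g' = g := by
            rw [hwu, subst_fn] at hwg
            injection hwg with hh _
          exact ⟨Term.fn g' us, hu, g', us, rfl, hg' ▸ hg⟩
    · exfalso
      obtain ⟨w, hw, hwred⟩ := hq
      have heq : t.subtermAt q = s.subtermAt q :=
        subtermAt_replaceAt_off π s _ t q hrep h2 h1
      have hqs : HasRedexAt R s q := ⟨w, by rw [← heq]; exact hw, hwred⟩
      have hπs : HasRedexAt R s π := ⟨_, hsub, r, hr, θ, rfl⟩
      rcases hQ q π hqs hπs with hh | hh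
      exacts [h1 hh, h2 hh]
  intro p q hp hq
  rcases hclass p hp with hp' | ⟨ρ₁, hρ₁, rfl⟩ <;>
    rcases hclass q hq with hq' | ⟨ρ₂, hρ₂, rfl⟩
  · exact List.prefix_or_prefix_of_prefix hp' hq'
  · exact Or.inl (hp'.trans (π.prefix_append ρ₂))
  · exact Or.inr (hq'.trans (π.prefix_append ρ₁))
  · rcases hchain ρ₁ hρ₁ ρ₂ hρ₂ with hh | hh
    · exact Or.inl ((List.prefix_append_right_inj π).mpr hh)
    · exact Or.inr ((List.prefix_append_right_inj π).mpr hh)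

lemma redexChain_basic {R : Set (Rule σ V)} (hR : IsWfTRS R) {t : Term σ V}
    (hb : BasicTerm R t) :
    ∀ p q, HasRedexAt R t p → HasRedexAt R t q → p <+: q ∨ q <+: p := by
  obtain ⟨f, ts, rfl, _, hcons⟩ := hb
  have key : ∀ p, HasRedexAt R (Term.fn f ts) p → p = [] := by
    rintro p ⟨w, hw, hred⟩
    cases p with
    | nil => rfl
    | cons i p' =>
      cases hts : ts[i]? with
      | none => rw [subtermAt_cons_none hts] at hw; cases hw
      | some u₀ =>
        rw [subtermAt_fn_arg hts] at hw
        exact absurd hred (consTerm_not_redex hR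
          (consTerm_subterm p' u₀ w (hcons u₀ (List.mem_of_getElem? hts)) hw))
  intro p q hp hq
  rw [key p hp, key q hq]
  exact Or.inl (List.prefix_refl [])

lemma iterRel_trans {α : Type} {r : α → α → Prop} :
    ∀ {m n : ℕ} {a b c : α}, iterRel r m a b → iterRel r n b c → iterRel r (m + n) a c := by
  intro m
  induction m with
  | zero =>
    intro n a b c h1 h2
    have hab : a = b := h1
    subst hab
    simpa using h2
  | succ m ih =>
    intro n a b c h1 h2
    obtain ⟨b₀, hab₀, h1'⟩ := h1
    rw [show m + 1 + n = (m + n) + 1 by omega]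
    exact ⟨b₀, hab₀, ih h1' h2⟩

lemma iterRel_of_transGen {α : Type} {r : α → α → Prop} {a b : α}
    (h : Relation.TransGen r a b) : ∃ k, 0 < k ∧ iterRel r k a b := by
  induction h with
  | single h => exact ⟨1, Nat.one_pos, _, h, rfl⟩
  | tail _ hbc ih =>
    obtain ⟨k, hk, hik⟩ := ih
    exact ⟨k + 1, by omega, iterRel_trans hik ⟨_, hbc, rfl⟩⟩

lemma iterRel_trunc {α : Type} {r : α → α → Prop} :
    ∀ {m n : ℕ} {a c : α}, iterRel r m a c → n ≤ m → ∃ b, iterRel r n a b := by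
  intro m
  induction m with
  | zero =>
    intro n a c h hn
    obtain rfl := Nat.le_zero.mp hn
    exact ⟨a, rfl⟩
  | succ m ih =>
    intro n a c h hn
    obtain ⟨b₀, hab₀, h'⟩ := h
    cases n with
    | zero => exact ⟨a, rfl⟩
    | succ k =>
      obtain ⟨u, hu⟩ := ih (n := k) h' (by omega)
      exact ⟨u, b₀, hab₀, hu⟩

lemma transGen_of_parInnermost {R : Set (Rule σ V)} {s t : Term σ V}
    (h : ParInnermost R s t) : Relation.TransGen (InnermostRewrite R) s t := by
  cases h with
  | redex h _ _ => exact h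
  | congr _ _ _ h _ _ => exact h

lemma iter_par_to_inner {R : Set (Rule σ V)} :
    ∀ {n : ℕ} {s t : Term σ V}, iterRel (ParInnermost R) n s t →
      ∃ m, n ≤ m ∧ iterRel (InnermostRewrite R) m s t := by
  intro n
  induction n with
  | zero => intro s t h; exact ⟨0, le_refl 0, h⟩
  | succ n ih =>
    intro s t h
    obtain ⟨b, hsb, hbt⟩ := h
    obtain ⟨k, hk, hik⟩ := iterRel_of_transGen (transGen_of_parInnermost hsb)
    obtain ⟨m, hm, him⟩ := ih hbt
    exact ⟨k + m, by omega, iterRel_trans hik him⟩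

lemma iter_inner_to_par {R : Set (Rule σ V)} (hR : IsWfTRS R)
    (hOne : ∀ ρ ∈ R, ∃! c : List (List ℕ), MSDC R ρ.rhs c) :
    ∀ {n : ℕ} {s t : Term σ V},
      (∀ p q, HasRedexAt R s p → HasRedexAt R s q → p <+: q ∨ q <+: p) →
      iterRel (InnermostRewrite R) n s t → iterRel (ParInnermost R) n s t := by
  intro n
  induction n with
  | zero => intro s t _ h; exact h
  | succ n ih =>
    intro s t hQ h
    obtain ⟨b, hsb, hbt⟩ := h
    refine ⟨b, ?_, ih (redexChain_step hR hOne hQ hsb) hbt⟩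
    obtain ⟨π, r, hr, θ, hsub, hin, hrep⟩ := hsb
    apply parInnermost_of_aux hr θ π s b hsub hin hrep
    intro q hq
    rcases hQ q π hq ⟨_, hsub, r, hr, θ, rfl⟩ with hh | hh
    · exact hh
    · obtain ⟨ρ, rfl⟩ := hh
      cases ρ with
      | nil => simp
      | cons j ρ' =>
        exfalso
        obtain ⟨w, hw, hred⟩ := hq
        have hw' : (Term.subst θ r.lhs).subtermAt (j :: ρ') = some w := by
          rw [subtermAt_append, hsub] at hw
          exact hw
        exact hin.2 (j :: ρ') (by simp) w hw' hred

lemma dh_le_dh {α : Type} {r₁ r₂ : α → α → Prop} {s : α}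
    (h : ∀ (n : ℕ) (t : α), iterRel r₁ n s t → ∃ u, iterRel r₂ n s u) :
    Dh r₁ s ≤ Dh r₂ s := by
  apply sSup_le
  rintro e ⟨n, rfl, t, ht⟩
  obtain ⟨u, hu⟩ := h n t ht
  exact le_sSup ⟨n, rfl, u, hu⟩

end Aux5

/-- If `|MSDC(r)| = 1` for every rule of `R`, then
`pirc_R(n) = irc_R(n)` for all `n`. -/
theorem pirc_eq_irc_of_unique_msdc
    {σ V : Type} [Finite σ] (R : Set (Rule σ V)) (hR : IsWfTRS R)
    (hOne : ∀ ρ ∈ R, ∃! c : List (List ℕ), MSDC R ρ.rhs c) :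
    ∀ n : ℕ, pirc R n = irc R n := by
  intro n
  have key : ∀ t : Term σ V, BasicTerm R t →
      Dh (ParInnermost R) t = Dh (InnermostRewrite R) t := by
    intro t hb
    apply le_antisymm
    · apply dh_le_dh
      intro m u hmu
      obtain ⟨m', hm', h'⟩ := iter_par_to_inner hmu
      exact iterRel_trunc h' hm'
    · apply dh_le_dh
      intro m u hmu
      exact ⟨u, iter_inner_to_par hR hOne (redexChain_basic hR hb) hmu⟩
  unfold pirc irc
  congr 1
  ext d
  simp only [Set.mem_setOf_eq]
  constructor
  · rintro ⟨t, hb, hs, rfl⟩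
    exact ⟨t, hb, hs, key t hb⟩
  · rintro ⟨t, hb, hs, rfl⟩
    exact ⟨t, hb, hs, (key t hb).symm⟩

end ParallelComplexity
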